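/- Let W be an integrable real random variable and let c : (0,1) → ℝ be Lebesgue-integrable on (0,1). Suppose that for every δ ∈ (0,1), P(W ≤ c(δ)) ≥ 1 − δ. Then E[W] ≤ ∫₀¹ c(δ) dδ. -/

import Mathlib

open MeasureTheory ProbabilityTheory Real

open Set Filter Topology in
theorem expectation_le_integral_of_quantile_bounds
    {Ω : Type*} [MeasurableSpace Ω] (P : Measure Ω) [IsProbabilityMeasure P]
    (W : Ω → ℝ) (hW : Integrable W P)
    (c : ℝ → ℝ) (hc : IntegrableOn c (Set.Ioo (0 : ℝ) 1))
    (h : ∀ δ ∈ Set.Ioo (0 : ℝ) 1, ENNReal.ofReal (1 - δ) ≤ P {ω | W ω ≤ c δ}) :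
    ∫ ω, W ω ∂P ≤ ∫ δ in Set.Ioo (0 : ℝ) 1, c δ := by
  classical
  have hWm : AEMeasurable W P := hW.aemeasurable
  set μ : Measure ℝ := P.map W with hμ
  haveI : IsProbabilityMeasure μ := Measure.isProbabilityMeasure_map hWm
  set S : ℝ → Set ℝ := fun p => {x | p ≤ cdf μ x} with hSdef
  set Q : ℝ → ℝ := fun p => sInf (S p) with hQdef
  -- the sets S p are nonempty for p < 1
  have hne : ∀ p : ℝ, p < 1 → (S p).Nonempty := by
    intro p hp
    obtain ⟨x, hx⟩ := ((tendsto_cdf_atTop μ).eventually (eventually_ge_nhds hp)).exists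
    exact ⟨x, hx⟩
  -- the sets S p are bounded below for 0 < p
  have hbdd : ∀ p : ℝ, 0 < p → BddBelow (S p) := by
    intro p hp
    obtain ⟨x0, hx0⟩ := ((tendsto_cdf_atBot μ).eventually (eventually_lt_nhds hp)).exists
    refine ⟨x0, fun s hs => ?_⟩
    by_contra hlt
    push_neg at hlt
    exact absurd (hs.trans (monotone_cdf μ hlt.le)) (not_le.mpr hx0)
  -- Galois connection between Q and the cdf
  have hgal : ∀ p ∈ Ioo (0:ℝ) 1, ∀ x : ℝ, Q p ≤ x ↔ p ≤ cdf μ x := by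
    intro p hp x
    constructor
    · intro hqx
      have hQin : p ≤ cdf μ (Q p) := by
        have hcont : ContinuousWithinAt (cdf μ) (Ioi (Q p)) (Q p) :=
          ((cdf μ).right_continuous (Q p)).mono Ioi_subset_Ici_self
        refine ge_of_tendsto hcont ?_
        filter_upwards [self_mem_nhdsWithin] with y hy
        obtain ⟨s, hsS, hsy⟩ := exists_lt_of_csInf_lt (hne p hp.2) hy
        exact le_trans hsS (monotone_cdf μ hsy.le)
      exact hQin.trans (monotone_cdf μ hqx)
    · intro hpx
      exact csInf_le (hbdd p hp.1) hpx
  -- Q is monotone on (0,1), hence a.e. measurable there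
  have hmono : MonotoneOn Q (Ioo (0:ℝ) 1) := by
    intro p1 h1 p2 h2 h12
    exact csInf_le_csInf (hbdd p1 h1.1) (hne p2 h2.2) (fun x hx => le_trans h12 hx)
  have hQm : AEMeasurable Q (volume.restrict (Ioo (0:ℝ) 1)) :=
    aemeasurable_restrict_of_monotoneOn measurableSet_Ioo hmono
  haveI : IsProbabilityMeasure (volume.restrict (Ioo (0:ℝ) 1)) :=
    ⟨by simp [Real.volume_Ioo]⟩
  -- inverse transform sampling : Q pushes Lebesgue on (0,1) to μ
  have hmap : (volume.restrict (Ioo (0:ℝ) 1)).map Q = μ := by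
    refine Measure.ext_of_Iic _ _ (fun x => ?_)
    rw [Measure.map_apply_of_aemeasurable hQm measurableSet_Iic,
        Measure.restrict_apply' measurableSet_Ioo]
    have hset : Q ⁻¹' Iic x ∩ Ioo (0:ℝ) 1 = Iic (cdf μ x) ∩ Ioo (0:ℝ) 1 := by
      ext p
      simp only [mem_inter_iff, mem_preimage, mem_Iic, and_congr_left_iff]
      intro hp
      exact hgal p hp x
    rw [hset, ← ofReal_cdf μ x]
    have h0 : (0:ℝ) ≤ cdf μ x := cdf_nonneg μ x
    rcases lt_or_eq_of_le (cdf_le_one μ x) with h1' | h1'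
    · have hI : Iic (cdf μ x) ∩ Ioo (0:ℝ) 1 = Ioc 0 (cdf μ x) := by
        ext p
        constructor
        · rintro ⟨hpy, hp0, _⟩; exact ⟨hp0, hpy⟩
        · rintro ⟨hp0, hpy⟩; exact ⟨hpy, hp0, lt_of_le_of_lt hpy h1'⟩
      rw [hI, Real.volume_Ioc, sub_zero]
    · have hI : Iic (cdf μ x) ∩ Ioo (0:ℝ) 1 = Ioo (0:ℝ) 1 := by
        refine inter_eq_self_of_subset_right (fun p hp => ?_)
        simp only [mem_Iic, h1']
        exact hp.2.le
      rw [hI, Real.volume_Ioo, h1']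
      norm_num
  -- transfer integrals
  have hint1 : ∫ ω, W ω ∂P = ∫ x, x ∂μ :=
    (integral_map hWm aestronglyMeasurable_id).symm
  have hidint : Integrable (fun x : ℝ => x) μ :=
    (integrable_map_measure aestronglyMeasurable_id hWm).mpr hW
  have hint2 : ∫ x, x ∂μ = ∫ p in Ioo (0:ℝ) 1, Q p := by
    rw [← hmap]
    exact integral_map hQm aestronglyMeasurable_id
  have hQint : IntegrableOn Q (Ioo (0:ℝ) 1) := by
    have := (integrable_map_measure aestronglyMeasurable_id hQm).mp (hmap ▸ hidint)
    exact this
  -- pointwise bound : Q p ≤ c (1 - p)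
  have hpt : ∀ p ∈ Ioo (0:ℝ) 1, Q p ≤ c (1 - p) := by
    intro p hp
    have hδ : (1 - p) ∈ Ioo (0:ℝ) 1 := ⟨by linarith [hp.2], by linarith [hp.1]⟩
    have hh := h (1 - p) hδ
    have hμI : μ (Iic (c (1 - p))) = P {ω | W ω ≤ c (1 - p)} := by
      rw [hμ, Measure.map_apply_of_aemeasurable hWm measurableSet_Iic]
      rfl
    have hle : ENNReal.ofReal p ≤ ENNReal.ofReal (cdf μ (c (1 - p))) := by
      rw [ofReal_cdf, hμI]
      simpa using hh
    have hple : p ≤ cdf μ (c (1 - p)) :=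
      (ENNReal.ofReal_le_ofReal_iff (cdf_nonneg _ _)).mp hle
    exact (hgal p hp _).mpr hple
  -- reflection p ↦ 1 - p preserves Lebesgue measure and (0,1)
  have hmp : MeasurePreserving (fun x : ℝ => 1 - x) volume volume :=
    Measure.measurePreserving_sub_left volume 1
  have hemb : MeasurableEmbedding (fun x : ℝ => 1 - x) :=
    (MeasurableEquiv.subLeft (1:ℝ)).measurableEmbedding
  have hpre : (fun x : ℝ => 1 - x) ⁻¹' (Ioo (0:ℝ) 1) = Ioo (0:ℝ) 1 := by
    ext p
    simp only [mem_preimage, mem_Ioo]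
    constructor <;> (rintro ⟨a, b⟩; constructor <;> linarith)
  have hcint : IntegrableOn (fun p : ℝ => c (1 - p)) (Ioo (0:ℝ) 1) := by
    have := (hmp.integrableOn_comp_preimage hemb (s := Ioo (0:ℝ) 1)).mpr hc
    rw [hpre] at this
    exact this
  have hrefl : ∫ p in Ioo (0:ℝ) 1, c (1 - p) = ∫ δ in Ioo (0:ℝ) 1, c δ := by
    have := hmp.setIntegral_preimage_emb hemb c (Ioo (0:ℝ) 1)
    rwa [hpre] at this
  calc ∫ ω, W ω ∂P = ∫ p in Ioo (0:ℝ) 1, Q p := hint1.trans hint2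
    _ ≤ ∫ p in Ioo (0:ℝ) 1, c (1 - p) :=
        setIntegral_mono_on hQint hcint measurableSet_Ioo hpt
    _ = ∫ δ in Ioo (0:ℝ) 1, c δ := hrefl
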